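/- Assume p ≤ √(3 ln n / m) and liminf_{n→∞} d0/ln n ≥ 1. Then with high probability, for every vertex v ∈ V simultaneously: W(v) ≤ 4mp, W'(v) ≤ 4·d0, and the degree of v in G(n,m,p) is at most 12·d1. -/

import Mathlib

open MeasureTheory Filter

noncomputable def bern (p : ℝ) : Measure Bool :=
  (PMF.bernoulli (min (Real.toNNReal p) 1) (min_le_right _ _)).toMeasure

/-- The random intersection graph model: the sample space is the bipartite
choice structure `ω : Fin n → Fin m → Bool`, where `ω v w = true` means vertex `v`
chose feature `w`, each choice made independently with probability `p`. -/
noncomputable def rig (n m : ℕ) (p : ℝ) : Measure (Fin n → Fin m → Bool) :=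
  Measure.pi fun _ => Measure.pi fun _ => bern p

/-- The intersection graph determined by the choices `ω`:
two distinct vertices are adjacent iff they share a feature. -/
def rigGraph {n m : ℕ} (ω : Fin n → Fin m → Bool) : SimpleGraph (Fin n) where
  Adj v v' := v ≠ v' ∧ ∃ w, ω v w = true ∧ ω v' w = true
  symm := by constructor; rintro v v' ⟨h, w, h1, h2⟩; exact ⟨h.symm, w, h2, h1⟩
  loopless := by constructor; rintro v ⟨h, -⟩; exact h rfl

/-- degree of `v` in the intersection graph -/
noncomputable def deg {n m : ℕ} (ω : Fin n → Fin m → Bool) (v : Fin n) : ℕ :=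
  Set.ncard {u | (rigGraph ω).Adj v u}

/-- `W(v)`: number of features chosen by `v` -/
noncomputable def Wv {n m : ℕ} (ω : Fin n → Fin m → Bool) (v : Fin n) : ℕ :=
  Set.ncard {w | ω v w = true}

/-- `V(w)`: number of vertices choosing feature `w` -/
noncomputable def Vw {n m : ℕ} (ω : Fin n → Fin m → Bool) (w : Fin m) : ℕ :=
  Set.ncard {v | ω v w = true}

/-- `W'(v)`: number of features chosen by `v` that are chosen by at least two vertices -/
noncomputable def Wv' {n m : ℕ} (ω : Fin n → Fin m → Bool) (v : Fin n) : ℕ :=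
  Set.ncard {w | ω v w = true ∧ 2 ≤ Set.ncard {u | ω u w = true}}

/-- `W(S)`: number of features chosen by at least one vertex of `S` -/
noncomputable def WS {n m : ℕ} (ω : Fin n → Fin m → Bool) (S : Set (Fin n)) : ℕ :=
  Set.ncard {w | ∃ v ∈ S, ω v w = true}

/-- `V(R)`: number of vertices choosing at least one feature of `R` -/
noncomputable def VR {n m : ℕ} (ω : Fin n → Fin m → Bool) (R : Set (Fin m)) : ℕ :=
  Set.ncard {v | ∃ w ∈ R, ω v w = true}

/-- `W''(K)`: number of features chosen by at least two vertices of `K` -/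
noncomputable def WSpp {n m : ℕ} (ω : Fin n → Fin m → Bool) (K : Set (Fin n)) : ℕ :=
  Set.ncard {w | 2 ≤ Set.ncard {v | v ∈ K ∧ ω v w = true}}

/-- `N(S)`: number of vertices outside `S` adjacent to at least one vertex of `S` -/
noncomputable def NS {n m : ℕ} (ω : Fin n → Fin m → Bool) (S : Set (Fin n)) : ℕ :=
  Set.ncard {u | u ∉ S ∧ ∃ v ∈ S, (rigGraph ω).Adj v u}

noncomputable def d0 (n m : ℕ) (p : ℝ) : ℝ := m * p * (1 - (1 - p) ^ (n - 1))

noncomputable def d1 (n m : ℕ) (p : ℝ) : ℝ := n * m * p ^ 2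

open scoped ENNReal

lemma measurableSet_all {α} [MeasurableSpace α] [MeasurableSingletonClass α] [Countable α]
    (s : Set α) : MeasurableSet s := s.to_countable.measurableSet

lemma measure_ext_singleton {α} [Fintype α] [MeasurableSpace α] [MeasurableSingletonClass α]
    {μ ν : Measure α} (h : ∀ x, μ {x} = ν {x}) : μ = ν := by
  classical
  ext s hs
  have hs' : s = ⋃ x ∈ (Set.toFinite s).toFinset, {x} := by
    ext y
    simp only [Set.mem_iUnion, Set.mem_singleton_iff, Set.Finite.mem_toFinset]
    exact ⟨fun h => ⟨y, h, rfl⟩, fun ⟨x, hx, e⟩ => e ▸ hx⟩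
  have hd : (↑(Set.toFinite s).toFinset : Set α).PairwiseDisjoint (fun x : α => ({x} : Set α)) :=
    fun x _ y _ hxy => by simp [Set.disjoint_singleton, hxy]
  rw [hs', measure_biUnion_finset hd (fun b _ => measurableSet_singleton b),
    measure_biUnion_finset hd (fun b _ => measurableSet_singleton b)]
  simp [h]

lemma pi_measure_singleton {ι} [Fintype ι] {α : ι → Type*} [∀ i, MeasurableSpace (α i)]
    (μ : ∀ i, Measure (α i)) [∀ i, IsProbabilityMeasure (μ i)] (x : ∀ i, α i) :
    Measure.pi μ {x} = ∏ i, μ i {x i} := by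
  rw [← Set.univ_pi_singleton, Measure.pi_pi]

noncomputable def colMeas (n : ℕ) (p : ℝ) : Measure (Fin n → Bool) :=
  Measure.pi fun _ => bern p

noncomputable def rigT (n m : ℕ) (p : ℝ) : Measure (Fin m → Fin n → Bool) :=
  Measure.pi fun _ => colMeas n p

instance (p : ℝ) : IsProbabilityMeasure (bern p) := PMF.toMeasure.isProbabilityMeasure _
instance (n : ℕ) (p : ℝ) : IsProbabilityMeasure (colMeas n p) := by
  unfold colMeas; infer_instance
instance (n m : ℕ) (p : ℝ) : IsProbabilityMeasure (rig n m p) := by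
  unfold rig; infer_instance
instance (n m : ℕ) (p : ℝ) : IsProbabilityMeasure (rigT n m p) := by
  unfold rigT; infer_instance

lemma swap_measurable (n m : ℕ) :
    Measurable (Function.swap : (Fin m → Fin n → Bool) → (Fin n → Fin m → Bool)) :=
  measurable_of_countable _

lemma rig_eq_map (n m : ℕ) (p : ℝ) :
    rig n m p = Measure.map Function.swap (rigT n m p) := by
  apply measure_ext_singleton
  intro x
  rw [Measure.map_apply (swap_measurable n m) (measurableSet_singleton _)]
  have hpre : (Function.swap : (Fin m → Fin n → Bool) → _) ⁻¹' {x} = {Function.swap x} := by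
    ext y
    simp only [Set.mem_preimage, Set.mem_singleton_iff]
    constructor
    · rintro rfl; rfl
    · rintro rfl; rfl
  rw [hpre, rig, rigT, pi_measure_singleton, pi_measure_singleton]
  simp only [colMeas]
  calc (∏ v, (Measure.pi fun _ : Fin m => bern p) {x v})
      = ∏ v, ∏ w, bern p {x v w} :=
        Finset.prod_congr rfl fun v _ => pi_measure_singleton _ _
    _ = ∏ w, ∏ v, bern p {x v w} := Finset.prod_comm
    _ = ∏ w, (Measure.pi fun _ : Fin n => bern p) {Function.swap x w} :=
        Finset.prod_congr rfl fun w _ => (pi_measure_singleton _ _).symm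

lemma rig_apply_cols (n m : ℕ) (p : ℝ) (C : Fin m → Set (Fin n → Bool)) :
    rig n m p {ω | ∀ w, (fun v => ω v w) ∈ C w} = ∏ w, colMeas n p (C w) := by
  rw [rig_eq_map, Measure.map_apply (swap_measurable n m) (measurableSet_all _)]
  have hpre : Function.swap ⁻¹' {ω : Fin n → Fin m → Bool | ∀ w, (fun v => ω v w) ∈ C w}
      = Set.pi Set.univ C := by
    ext ω'
    simp only [Set.mem_preimage, Set.mem_setOf_eq, Set.mem_univ_pi]
  rw [hpre, rigT, Measure.pi_pi]

lemma col_apply_pi (n : ℕ) (p : ℝ) (t : Fin n → Set Bool) :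
    colMeas n p (Set.univ.pi t) = ∏ v, bern p (t v) := Measure.pi_pi _ _

section bernvals
variable {p : ℝ}

lemma bern_true (hp1 : p ≤ 1) : bern p {true} = ENNReal.ofReal p := by
  rw [bern, PMF.toMeasure_apply_singleton _ _ (measurableSet_singleton _)]
  simp only [PMF.bernoulli_apply, Bool.cond_true]
  rw [min_eq_left (Real.toNNReal_le_one.2 hp1)]; rfl

lemma bern_false (hp0 : 0 ≤ p) (hp1 : p ≤ 1) : bern p {false} = ENNReal.ofReal (1 - p) := by
  rw [bern, PMF.toMeasure_apply_singleton _ _ (measurableSet_singleton _)]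
  simp only [PMF.bernoulli_apply, Bool.cond_false]
  rw [min_eq_left (Real.toNNReal_le_one.2 hp1), ENNReal.coe_sub, ENNReal.coe_one,
    ← ENNReal.ofReal_one, show ((p.toNNReal : ℝ≥0∞)) = ENNReal.ofReal p from rfl,
    ← ENNReal.ofReal_sub _ hp0]

lemma col_true (hp1 : p ≤ 1) {n : ℕ} (v : Fin n) :
    colMeas n p {g | g v = true} = ENNReal.ofReal p := by
  classical
  have hs : {g : Fin n → Bool | g v = true}
      = Set.univ.pi (fun u => if u = v then {true} else Set.univ) := by
    ext g
    simp only [Set.mem_setOf_eq, Set.mem_univ_pi]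
    constructor
    · intro h u
      split
      · next h' => subst h'; simpa using h
      · trivial
    · intro h
      have := h v
      simpa using this
  rw [hs, col_apply_pi]
  have hf : ∀ u : Fin n, bern p (if u = v then ({true} : Set Bool) else Set.univ)
      = if u = v then ENNReal.ofReal p else 1 := by
    intro u; split
    · exact bern_true hp1
    · exact measure_univ
  rw [Finset.prod_congr rfl fun u _ => hf u]
  simp

lemma col_false_elsewhere (hp0 : 0 ≤ p) (hp1 : p ≤ 1) {n : ℕ} (v : Fin n) :
    colMeas n p {g | g v = true ∧ ∀ u, u ≠ v → g u = false}
      = ENNReal.ofReal p * (ENNReal.ofReal (1 - p)) ^ (n - 1) := by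
  classical
  have hs : {g : Fin n → Bool | g v = true ∧ ∀ u, u ≠ v → g u = false}
      = Set.univ.pi (fun u => if u = v then {true} else {false}) := by
    ext g
    simp only [Set.mem_setOf_eq, Set.mem_univ_pi]
    constructor
    · rintro ⟨h1, h2⟩ u
      split
      · next h' => subst h'; simpa using h1
      · next h' => simpa using h2 u h'
    · intro h
      have hv := h v
      simp only [if_pos rfl, Set.mem_singleton_iff] at hv
      refine ⟨hv, fun u hu => ?_⟩
      have := h u
      rw [if_neg hu] at this
      simpa using this
  rw [hs, col_apply_pi]
  rw [← Finset.mul_prod_erase Finset.univ _ (Finset.mem_univ v)]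
  rw [if_pos rfl, bern_true hp1]
  congr 1
  have : ∀ u ∈ Finset.univ.erase v,
      bern p (if u = v then ({true} : Set Bool) else {false}) = ENNReal.ofReal (1 - p) := by
    intro u hu
    rw [if_neg (Finset.ne_of_mem_erase hu), bern_false hp0 hp1]
  rw [Finset.prod_congr rfl this, Finset.prod_const, Finset.card_erase_of_mem (Finset.mem_univ v),
    Finset.card_univ, Fintype.card_fin]

lemma col_shared (hp0 : 0 ≤ p) (hp1 : p ≤ 1) {n : ℕ} (v : Fin n) :
    colMeas n p {g | g v = true ∧ ∃ u, u ≠ v ∧ g u = true}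
      = ENNReal.ofReal (p * (1 - (1 - p) ^ (n - 1))) := by
  classical
  set A : Set (Fin n → Bool) := {g | g v = true}
  set A0 : Set (Fin n → Bool) := {g | g v = true ∧ ∀ u, u ≠ v → g u = false}
  have hset : {g : Fin n → Bool | g v = true ∧ ∃ u, u ≠ v ∧ g u = true} = A \ A0 := by
    ext g
    simp only [A, A0, Set.mem_diff, Set.mem_setOf_eq]
    constructor
    · rintro ⟨h1, u, hu, h2⟩
      refine ⟨h1, fun h => ?_⟩
      have := h.2 u hu
      rw [this] at h2
      cases h2
    · rintro ⟨h1, h2⟩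
      refine ⟨h1, ?_⟩
      by_contra hc
      push_neg at hc
      exact h2 ⟨h1, fun u hu => by
        have := hc u hu
        exact Bool.not_eq_true _ ▸ (Bool.eq_false_iff.mpr (by simpa using this))⟩
  have hsub : A0 ⊆ A := fun g hg => hg.1
  have hpow_nonneg : (0:ℝ) ≤ (1 - p) ^ (n - 1) := pow_nonneg (by linarith) _
  have hpow_le : (1 - p) ^ (n - 1) ≤ 1 := pow_le_one₀ (by linarith) (by linarith)
  rw [hset, measure_diff hsub (measurableSet_all A0).nullMeasurableSet (measure_ne_top _ _)]
  rw [col_true hp1 v, col_false_elsewhere hp0 hp1 v]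
  rw [← ENNReal.ofReal_pow (by linarith), ← ENNReal.ofReal_mul hp0,
    ← ENNReal.ofReal_sub _ (by positivity)]
  congr 1
  ring

lemma col_row (hp1 : p ≤ 1) {n : ℕ} (v : Fin n) (b : Bool) (Tw : Finset (Fin n)) (hv : v ∉ Tw) :
    colMeas n p {g | g v = b ∧ ∀ u ∈ Tw, g u = true}
      = bern p {b} * (ENNReal.ofReal p) ^ Tw.card := by
  classical
  have hs : {g : Fin n → Bool | g v = b ∧ ∀ u ∈ Tw, g u = true}
      = Set.univ.pi (fun u => if u = v then {b} else if u ∈ Tw then {true} else Set.univ) := by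
    ext g
    simp only [Set.mem_setOf_eq, Set.mem_univ_pi]
    constructor
    · rintro ⟨h1, h2⟩ u
      split
      · next h' => subst h'; simpa using h1
      · split
        · next h' => simpa using h2 u h'
        · trivial
    · intro h
      have hvv := h v
      rw [if_pos rfl] at hvv
      refine ⟨hvv, fun u hu => ?_⟩
      have hne : u ≠ v := fun e => hv (e ▸ hu)
      have := h u
      rw [if_neg hne, if_pos hu] at this
      simpa using this
  rw [hs, col_apply_pi]
  rw [← Finset.mul_prod_erase Finset.univ _ (Finset.mem_univ v), if_pos rfl]
  congr 1
  have hstep : ∀ u ∈ Finset.univ.erase v,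
      bern p (if u = v then ({b} : Set Bool) else if u ∈ Tw then {true} else Set.univ)
        = if u ∈ Tw then ENNReal.ofReal p else 1 := by
    intro u hu
    rw [if_neg (Finset.ne_of_mem_erase hu)]
    split
    · exact bern_true hp1
    · exact measure_univ
  rw [Finset.prod_congr rfl hstep, Finset.prod_ite_mem, Finset.prod_const,
    Finset.inter_eq_right.mpr (fun u hu => Finset.mem_erase.mpr ⟨fun e => hv (by rwa [e] at hu), Finset.mem_univ u⟩)]

end bernvals

lemma exists_finset_of_le_ncard {α : Type*} [Fintype α] {P : α → Prop} {k : ℕ}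
    (h : k ≤ Set.ncard {x | P x}) : ∃ S : Finset α, S.card = k ∧ ∀ x ∈ S, P x := by
  classical
  have hfin : {x | P x}.Finite := Set.toFinite _
  rw [Set.ncard_eq_toFinset_card _ hfin] at h
  obtain ⟨S, hS, hcard⟩ := Finset.exists_subset_card_eq h
  exact ⟨S, hcard, fun x hx => hfin.mem_toFinset.1 (hS hx)⟩

lemma rig_all_cols_measure (n m : ℕ) (p : ℝ) (S : Finset (Fin m)) (A : Set (Fin n → Bool)) :
    rig n m p {ω | ∀ w ∈ S, (fun v => ω v w) ∈ A} = colMeas n p A ^ S.card := by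
  classical
  have hset : {ω : Fin n → Fin m → Bool | ∀ w ∈ S, (fun v => ω v w) ∈ A}
      = {ω | ∀ w, (fun v => ω v w) ∈ (fun w => if w ∈ S then A else Set.univ) w} := by
    ext ω
    simp only [Set.mem_setOf_eq]
    constructor
    · intro h w
      split
      · next hw => exact h w hw
      · trivial
    · intro h w hw
      have := h w
      rwa [if_pos hw] at this
  rw [hset, rig_apply_cols]
  have hstep : ∀ w : Fin m, colMeas n p (if w ∈ S then A else Set.univ)
      = if w ∈ S then colMeas n p A else 1 := by
    intro w; split
    · rfl
    · exact measure_univ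
  rw [Finset.prod_congr rfl fun w _ => hstep w, Finset.prod_ite_mem, Finset.univ_inter,
    Finset.prod_const]

lemma bound_W {n m : ℕ} {p : ℝ} (hp1 : p ≤ 1) (v : Fin n) (k : ℕ) :
    rig n m p {ω | k ≤ Wv ω v} ≤ (m.choose k) * (ENNReal.ofReal p) ^ k := by
  classical
  have hsub : {ω : Fin n → Fin m → Bool | k ≤ Wv ω v}
      ⊆ ⋃ S ∈ Finset.univ.powersetCard k,
          {ω : Fin n → Fin m → Bool | ∀ w ∈ S, (fun v' => ω v' w) ∈ {g : Fin n → Bool | g v = true}} := by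
    intro ω hω
    obtain ⟨S, hcard, hall⟩ := exists_finset_of_le_ncard (hω : k ≤ Set.ncard {w | ω v w = true})
    exact Set.mem_biUnion (Finset.mem_powersetCard.mpr ⟨Finset.subset_univ S, hcard⟩)
      (fun w hw => hall w hw)
  calc rig n m p {ω | k ≤ Wv ω v}
      ≤ ∑ S ∈ Finset.univ.powersetCard k,
          rig n m p {ω | ∀ w ∈ S, (fun v' => ω v' w) ∈ {g : Fin n → Bool | g v = true}} :=
        (measure_mono hsub).trans (measure_biUnion_finset_le _ _)
    _ = ∑ S ∈ Finset.univ.powersetCard k, (ENNReal.ofReal p) ^ k := by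
        refine Finset.sum_congr rfl fun S hS => ?_
        rw [rig_all_cols_measure, col_true hp1 v, (Finset.mem_powersetCard.mp hS).2]
    _ = (m.choose k) * (ENNReal.ofReal p) ^ k := by
        rw [Finset.sum_const, Finset.card_powersetCard, Finset.card_univ, Fintype.card_fin,
          nsmul_eq_mul]

lemma bound_W' {n m : ℕ} {p : ℝ} (hp0 : 0 ≤ p) (hp1 : p ≤ 1) (v : Fin n) (k : ℕ) :
    rig n m p {ω | k ≤ Wv' ω v}
      ≤ (m.choose k) * (ENNReal.ofReal (p * (1 - (1 - p) ^ (n - 1)))) ^ k := by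
  classical
  set A : Set (Fin n → Bool) := {g | g v = true ∧ ∃ u, u ≠ v ∧ g u = true} with hA
  have hsub : {ω : Fin n → Fin m → Bool | k ≤ Wv' ω v}
      ⊆ ⋃ S ∈ Finset.univ.powersetCard k,
          {ω : Fin n → Fin m → Bool | ∀ w ∈ S, (fun v' => ω v' w) ∈ A} := by
    intro ω hω
    obtain ⟨S, hcard, hall⟩ := exists_finset_of_le_ncard
      (hω : k ≤ Set.ncard {w | ω v w = true ∧ 2 ≤ Set.ncard {u | ω u w = true}})
    refine Set.mem_biUnion (Finset.mem_powersetCard.mpr ⟨Finset.subset_univ S, hcard⟩) ?_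
    intro w hw
    obtain ⟨h1, h2⟩ := hall w hw
    obtain ⟨u, hu, hune⟩ := Set.exists_ne_of_one_lt_ncard (by omega : 1 < Set.ncard {u | ω u w = true}) v
    exact ⟨h1, u, hune, hu⟩
  calc rig n m p {ω | k ≤ Wv' ω v}
      ≤ ∑ S ∈ Finset.univ.powersetCard k,
          rig n m p {ω | ∀ w ∈ S, (fun v' => ω v' w) ∈ A} :=
        (measure_mono hsub).trans (measure_biUnion_finset_le _ _)
    _ = ∑ S ∈ Finset.univ.powersetCard k, (ENNReal.ofReal (p * (1 - (1 - p) ^ (n - 1)))) ^ k := by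
        refine Finset.sum_congr rfl fun S hS => ?_
        rw [rig_all_cols_measure, hA, col_shared hp0 hp1 v, (Finset.mem_powersetCard.mp hS).2]
    _ = (m.choose k) * _ ^ k := by
        rw [Finset.sum_const, Finset.card_powersetCard, Finset.card_univ, Fintype.card_fin,
          nsmul_eq_mul]

lemma col_single {p : ℝ} {n : ℕ} (v : Fin n) (b : Bool) :
    colMeas n p {g | g v = b} = bern p {b} := by
  classical
  have hs : {g : Fin n → Bool | g v = b}
      = Set.univ.pi (fun u => if u = v then {b} else Set.univ) := by
    ext g
    simp only [Set.mem_setOf_eq, Set.mem_univ_pi]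
    constructor
    · intro h u
      split
      · next h' => subst h'; simpa using h
      · trivial
    · intro h
      have := h v
      simpa using this
  rw [hs, col_apply_pi]
  have hf : ∀ u : Fin n, bern p (if u = v then ({b} : Set Bool) else Set.univ)
      = if u = v then bern p {b} else 1 := by
    intro u; split
    · rfl
    · exact measure_univ
  rw [Finset.prod_congr rfl fun u _ => hf u]
  simp

lemma rig_row_eq {n m : ℕ} {p : ℝ} (v : Fin n) (f : Fin m → Bool) :
    rig n m p {ω | ω v = f} = ∏ w, bern p {f w} := by
  have hset : {ω : Fin n → Fin m → Bool | ω v = f}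
      = {ω | ∀ w, (fun v' => ω v' w) ∈ (fun w => {g : Fin n → Bool | g v = f w}) w} := by
    ext ω
    simp only [Set.mem_setOf_eq, funext_iff]
  rw [hset, rig_apply_cols]
  exact Finset.prod_congr rfl fun w _ => col_single v (f w)

lemma deg_le_pairs {n m : ℕ} (ω : Fin n → Fin m → Bool) (v : Fin n) :
    deg ω v ≤ (((Finset.univ.erase v) ×ˢ (Finset.univ : Finset (Fin m))).filter
      (fun uw => ω v uw.2 = true ∧ ω uw.1 uw.2 = true)).card := by
  classical
  rcases Nat.eq_zero_or_pos m with hm | hm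
  · have : {u | (rigGraph ω).Adj v u} = ∅ := by
      ext u
      simp only [Set.mem_setOf_eq, Set.mem_empty_iff_false, iff_false]
      rintro ⟨-, w, -⟩
      exact absurd w.2 (by omega)
    simp [deg, this]
  · haveI : Inhabited (Fin m) := ⟨⟨0, hm⟩⟩
    set T := ((Finset.univ.erase v) ×ˢ (Finset.univ : Finset (Fin m))).filter
      (fun uw => ω v uw.2 = true ∧ ω uw.1 uw.2 = true)
    set φ : Fin n → Fin n × Fin m := fun u =>
      (u, if h : ∃ w, ω v w = true ∧ ω u w = true then h.choose else default)
    have hmaps : ∀ u ∈ {u | (rigGraph ω).Adj v u}, φ u ∈ (↑T : Set (Fin n × Fin m)) := by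
      intro u hu
      obtain ⟨hne, hex⟩ := hu
      simp only [φ, dif_pos hex, Finset.coe_filter, Set.mem_setOf_eq, T]
      exact ⟨Finset.mem_product.mpr ⟨Finset.mem_erase.mpr ⟨hne.symm, Finset.mem_univ u⟩,
        Finset.mem_univ _⟩, hex.choose_spec.1, hex.choose_spec.2⟩
    have hinj : Set.InjOn φ {u | (rigGraph ω).Adj v u} := by
      intro a _ b _ hab
      exact congrArg Prod.fst hab
    calc deg ω v ≤ (↑T : Set (Fin n × Fin m)).ncard :=
          Set.ncard_le_ncard_of_injOn φ hmaps hinj (T.finite_toSet)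
      _ = T.card := Set.ncard_coe_finset T

lemma bound_deg {n m : ℕ} {p : ℝ} (hp1 : p ≤ 1) (v : Fin n) (K k : ℕ) :
    rig n m p {ω | Wv ω v ≤ K ∧ k ≤ deg ω v}
      ≤ (((n - 1) * K).choose k) * (ENNReal.ofReal p) ^ k := by
  classical
  set suppf : (Fin m → Bool) → Finset (Fin m) := fun f => Finset.univ.filter (fun w => f w = true)
    with hsuppf
  set pairs : (Fin m → Bool) → Finset (Fin n × Fin m) :=
    fun f => (Finset.univ.erase v) ×ˢ (suppf f) with hpairs
  set Fs : Finset (Fin m → Bool) :=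
    Finset.univ.filter (fun f => (suppf f).card ≤ K) with hFs
  set E : (Fin m → Bool) → Finset (Fin n × Fin m) → Set (Fin n → Fin m → Bool) :=
    fun f T => {ω | ω v = f ∧ ∀ uw ∈ T, ω uw.1 uw.2 = true} with hE
  -- inclusion
  have hsub : {ω : Fin n → Fin m → Bool | Wv ω v ≤ K ∧ k ≤ deg ω v}
      ⊆ ⋃ f ∈ Fs, ⋃ T ∈ (pairs f).powersetCard k, E f T := by
    rintro ω ⟨hK, hdeg⟩
    have hWcard : Wv ω v = (suppf (ω v)).card := by
      rw [Wv, show {w | ω v w = true} = (↑(suppf (ω v)) : Set (Fin m)) by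
        ext w; simp [suppf]]
      exact Set.ncard_coe_finset _
    have hfFs : ω v ∈ Fs := by
      simp only [hFs, Finset.mem_filter, Finset.mem_univ, true_and]
      omega
    have hTfull : ((Finset.univ.erase v) ×ˢ (Finset.univ : Finset (Fin m))).filter
        (fun uw => ω v uw.2 = true ∧ ω uw.1 uw.2 = true)
        = (pairs (ω v)).filter (fun uw => ω uw.1 uw.2 = true) := by
      ext uw
      simp only [Finset.mem_filter, Finset.mem_product, hpairs, hsuppf, Finset.mem_univ,
        true_and, and_true]
      tauto
    have hk : k ≤ ((pairs (ω v)).filter (fun uw => ω uw.1 uw.2 = true)).card := by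
      calc k ≤ deg ω v := hdeg
        _ ≤ _ := deg_le_pairs ω v
        _ = _ := by rw [hTfull]
    obtain ⟨T, hTsub, hTcard⟩ := Finset.exists_subset_card_eq hk
    have h1 : T ∈ (pairs (ω v)).powersetCard k :=
      Finset.mem_powersetCard.mpr ⟨hTsub.trans (Finset.filter_subset _ _), hTcard⟩
    have h2 : ω ∈ E (ω v) T := ⟨rfl, fun uw hw => (Finset.mem_filter.mp (hTsub hw)).2⟩
    exact Set.mem_biUnion hfFs (Set.mem_biUnion h1 h2)
  -- measure of each piece
  have hmeas : ∀ f : Fin m → Bool, ∀ T ∈ (pairs f).powersetCard k,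
      rig n m p (E f T) = rig n m p {ω | ω v = f} * (ENNReal.ofReal p) ^ k := by
    intro f T hT
    obtain ⟨hTsub, hTcard⟩ := Finset.mem_powersetCard.mp hT
    set Tw : Fin m → Finset (Fin n) := fun w => (T.filter (fun uw => uw.2 = w)).image Prod.fst
      with hTw
    have hmemTw : ∀ w u, u ∈ Tw w ↔ (u, w) ∈ T := by
      intro w u
      simp only [hTw, Finset.mem_image, Finset.mem_filter]
      constructor
      · rintro ⟨uw, ⟨h1, h2⟩, h3⟩
        rwa [show (u, w) = uw from Prod.ext h3.symm h2.symm]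
      · intro h
        exact ⟨(u, w), ⟨h, rfl⟩, rfl⟩
    have hvTw : ∀ w, v ∉ Tw w := by
      intro w hw
      have := hTsub ((hmemTw w v).1 hw)
      simp only [hpairs, Finset.mem_product, Finset.mem_erase] at this
      exact this.1.1 rfl
    have hset : E f T = {ω | ∀ w, (fun v' => ω v' w)
        ∈ (fun w => {g : Fin n → Bool | g v = f w ∧ ∀ u ∈ Tw w, g u = true}) w} := by
      ext ω
      simp only [hE, Set.mem_setOf_eq, funext_iff]
      constructor
      · rintro ⟨h1, h2⟩ w
        exact ⟨h1 w, fun u hu => h2 (u, w) ((hmemTw w u).1 hu)⟩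
      · intro h
        refine ⟨fun w => (h w).1, fun uw hw => ?_⟩
        exact (h uw.2).2 uw.1 ((hmemTw uw.2 uw.1).2 hw)
    rw [hset, rig_apply_cols]
    have hcols : ∀ w : Fin m, colMeas n p {g : Fin n → Bool | g v = f w ∧ ∀ u ∈ Tw w, g u = true}
        = bern p {f w} * (ENNReal.ofReal p) ^ (Tw w).card :=
      fun w => col_row hp1 v (f w) (Tw w) (hvTw w)
    rw [Finset.prod_congr rfl fun w _ => hcols w, Finset.prod_mul_distrib,
      Finset.prod_pow_eq_pow_sum]
    have hsum : ∑ w, (Tw w).card = k := by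
      have hfib : T.card = ∑ w, (T.filter (fun uw => uw.2 = w)).card :=
        Finset.card_eq_sum_card_fiberwise (fun uw _ => Finset.mem_univ uw.2)
      have hcardTw : ∀ w, (Tw w).card = (T.filter (fun uw => uw.2 = w)).card := by
        intro w
        refine Finset.card_image_of_injOn ?_
        intro a ha b hb hab
        exact Prod.ext hab ((Finset.mem_filter.mp ha).2.trans (Finset.mem_filter.mp hb).2.symm)
      rw [Finset.sum_congr rfl fun w _ => hcardTw w, ← hfib, hTcard]
    rw [hsum, rig_row_eq]
  -- assembling
  calc rig n m p {ω | Wv ω v ≤ K ∧ k ≤ deg ω v}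
      ≤ ∑ f ∈ Fs, rig n m p (⋃ T ∈ (pairs f).powersetCard k, E f T) :=
        (measure_mono hsub).trans (measure_biUnion_finset_le _ _)
    _ ≤ ∑ f ∈ Fs, ∑ T ∈ (pairs f).powersetCard k, rig n m p (E f T) :=
        Finset.sum_le_sum fun f _ => measure_biUnion_finset_le _ _
    _ ≤ ∑ f ∈ Fs, (((n - 1) * K).choose k) * (ENNReal.ofReal p) ^ k * rig n m p {ω | ω v = f} := by
        refine Finset.sum_le_sum fun f hf => ?_
        rw [Finset.sum_congr rfl (hmeas f), Finset.sum_const, Finset.card_powersetCard]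
        have hcard : (pairs f).card ≤ (n - 1) * K := by
          have : (pairs f).card = (n - 1) * (suppf f).card := by
            simp only [hpairs, Finset.card_product, Finset.card_erase_of_mem (Finset.mem_univ v),
              Finset.card_univ, Fintype.card_fin]
          rw [this]
          exact Nat.mul_le_mul_left _ ((Finset.mem_filter.mp hf).2)
        rw [nsmul_eq_mul]
        calc ((pairs f).card.choose k : ℝ≥0∞) * (rig n m p {ω | ω v = f} * (ENNReal.ofReal p) ^ k)
            ≤ (((n - 1) * K).choose k : ℝ≥0∞) * (rig n m p {ω | ω v = f} * (ENNReal.ofReal p) ^ k) := by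
              gcongr
          _ = (((n - 1) * K).choose k) * (ENNReal.ofReal p) ^ k * rig n m p {ω | ω v = f} := by
              ring
    _ ≤ (((n - 1) * K).choose k) * (ENNReal.ofReal p) ^ k := by
        rw [← Finset.mul_sum]
        have hdisj : (↑Fs : Set (Fin m → Bool)).PairwiseDisjoint
            (fun f => {ω : Fin n → Fin m → Bool | ω v = f}) := by
          intro f _ f' _ hne
          refine Set.disjoint_left.mpr ?_
          rintro ω rfl h'
          exact hne h'
        have hsum1 : ∑ f ∈ Fs, rig n m p {ω | ω v = f} ≤ 1 := by
          rw [← measure_biUnion_finset hdisj (fun f _ => measurableSet_all _)]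
          exact prob_le_one
        calc (((n - 1) * K).choose k : ℝ≥0∞) * (ENNReal.ofReal p) ^ k
              * ∑ f ∈ Fs, rig n m p {ω | ω v = f}
            ≤ _ * 1 := by gcongr
          _ = _ := mul_one _

lemma choose_mul_pow_le {N k : ℕ} (hk : 0 < k) {x : ℝ} (hx : 0 ≤ x) :
    (N.choose k : ℝ) * x ^ k ≤ (Real.exp 1 * N * x / k) ^ k := by
  have hfac : (0:ℝ) < k.factorial := by exact_mod_cast k.factorial_pos
  have hkk : (0:ℝ) < (k:ℝ) ^ k := pow_pos (by exact_mod_cast hk) k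
  have h1 : (N.choose k : ℝ) ≤ (N:ℝ) ^ k / k.factorial := Nat.choose_le_pow_div k N
  have h2 : ((k:ℝ)) ^ k / k.factorial ≤ Real.exp k := by
    calc ((k:ℝ)) ^ k / k.factorial
        ≤ ∑ i ∈ Finset.range (k + 1), (k:ℝ) ^ i / i.factorial := by
          refine Finset.single_le_sum (f := fun i => (k:ℝ) ^ i / i.factorial) ?_ ?_
          · intro i _
            positivity
          · exact Finset.self_mem_range_succ k
      _ ≤ Real.exp k := Real.sum_le_exp_of_nonneg (by positivity) _
  have key : (k:ℝ) ^ k ≤ Real.exp k * k.factorial := by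
    rw [div_le_iff₀ hfac] at h2
    exact h2
  have hNx : (0:ℝ) ≤ ((N:ℝ) * x) ^ k := by positivity
  calc (N.choose k : ℝ) * x ^ k
      ≤ ((N:ℝ) ^ k / k.factorial) * x ^ k := by
        exact mul_le_mul_of_nonneg_right h1 (by positivity)
    _ = ((N:ℝ) * x) ^ k / k.factorial := by rw [mul_pow]; ring
    _ ≤ Real.exp k * ((N:ℝ) * x) ^ k / (k:ℝ) ^ k := by
        rw [div_le_div_iff₀ hfac hkk]
        nlinarith [key, hNx]
    _ = (Real.exp 1 * N * x / k) ^ k := by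
        rw [div_pow, mul_pow, mul_pow, ← Real.exp_one_pow]
        ring

lemma log_three_gt : (1.088:ℝ) < Real.log 3 := by
  rw [Real.lt_log_iff_exp_lt (by norm_num)]
  have h2 : (1:ℝ) - 0.088 ≤ Real.exp (-0.088) := by
    have := Real.add_one_le_exp (-0.088 : ℝ)
    linarith
  have h3 : Real.exp 0.088 ≤ 1 / 0.912 := by
    rw [show (0.088:ℝ) = -(-0.088) by norm_num, Real.exp_neg]
    rw [one_div]
    exact inv_anti₀ (by norm_num) (by linarith)
  have h1 : Real.exp (1.088 : ℝ) = Real.exp 1 * Real.exp 0.088 := by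
    rw [← Real.exp_add]; norm_num
  rw [h1]
  calc Real.exp 1 * Real.exp 0.088
      ≤ 2.7182818286 * (1 / 0.912) :=
        mul_le_mul Real.exp_one_lt_d9.le h3 (Real.exp_pos _).le (by norm_num)
    _ < 3 := by norm_num

lemma log_four_gt : (1.3862943606:ℝ) < Real.log 4 := by
  have : (4:ℝ) = 2 ^ 2 := by norm_num
  rw [this, Real.log_pow]
  have := Real.log_two_gt_d9
  push_cast
  linarith

set_option maxHeartbeats 4000000 in
theorem degree_upper_bounds (m : ℕ → ℕ) (p : ℕ → ℝ)
    (hp : ∀ n, p n ∈ Set.Ioo (0 : ℝ) 1)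
    (hps : ∀ᶠ (n : ℕ) in atTop, p n ≤ Real.sqrt (3 * Real.log n / m n))
    (hd0 : 1 ≤ Filter.liminf (fun (n : ℕ) => d0 n (m n) (p n) / Real.log n) atTop) :
    Tendsto (fun (n : ℕ) => (rig n (m n) (p n)
        {ω | ∀ v : Fin n,
          (Wv ω v : ℝ) ≤ 4 * (m n : ℝ) * p n ∧
          (Wv' ω v : ℝ) ≤ 4 * d0 n (m n) (p n) ∧
          (deg ω v : ℝ) ≤ 12 * d1 n (m n) (p n)}).toReal)
      atTop (nhds 1) := by
  classical
  set G : ∀ n : ℕ, Set (Fin n → Fin (m n) → Bool) := fun n =>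
    {ω | ∀ v : Fin n,
      (Wv ω v : ℝ) ≤ 4 * (m n : ℝ) * p n ∧
      (Wv' ω v : ℝ) ≤ 4 * d0 n (m n) (p n) ∧
      (deg ω v : ℝ) ≤ 12 * d1 n (m n) (p n)} with hG
  have hsplit : ∀ n : ℕ, (rig n (m n) (p n) (G n)).toReal
      = 1 - (rig n (m n) (p n) (G n)ᶜ).toReal := by
    intro n
    have hadd := measure_add_measure_compl (μ := rig n (m n) (p n)) (measurableSet_all (G n))
    rw [measure_univ] at hadd
    have := congrArg ENNReal.toReal hadd
    rw [ENNReal.toReal_add (measure_ne_top _ _) (measure_ne_top _ _), ENNReal.toReal_one] at this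
    linarith
  change Tendsto (fun n : ℕ => (rig n (m n) (p n) (G n)).toReal) atTop (nhds 1)
  simp only [hsplit]
  have hzero : Tendsto (fun n : ℕ => (rig n (m n) (p n) (G n)ᶜ).toReal) atTop (nhds 0) := by
    have hlog : Tendsto (fun n : ℕ => Real.log n) atTop atTop :=
      Real.tendsto_log_atTop.comp tendsto_natCast_atTop_atTop
    have hexp : ∀ c : ℝ, 0 < c →
        Tendsto (fun n : ℕ => Real.exp (-c * Real.log n)) atTop (nhds 0) := by
      intro c hc
      exact Real.tendsto_exp_atBot.comp (hlog.const_mul_atTop_of_neg (by linarith))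
    have hh : Tendsto (fun n : ℕ => Real.exp (-(0.46:ℝ) * Real.log n) * 2
        + Real.exp (-(0.003:ℝ) * Real.log n)) atTop (nhds 0) := by
      have := ((hexp 0.46 (by norm_num)).mul_const 2).add (hexp 0.003 (by norm_num))
      simpa using this
    refine tendsto_of_tendsto_of_tendsto_of_le_of_le' tendsto_const_nhds hh
      (Eventually.of_forall fun n => ENNReal.toReal_nonneg) ?_
    -- main eventual bound
    have hbdd : IsBoundedUnder (· ≥ ·) atTop (fun n : ℕ => d0 n (m n) (p n) / Real.log n) := by
      refine isBoundedUnder_of ⟨0, fun n => ?_⟩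
      have h1 : (0:ℝ) ≤ d0 n (m n) (p n) := by
        obtain ⟨ha, hb⟩ := hp n
        have hpow : (1 - p n) ^ (n - 1) ≤ 1 :=
          pow_le_one₀ (by linarith) (by linarith)
        have hnn : (0:ℝ) ≤ 1 - (1 - p n) ^ (n - 1) := by linarith
        exact mul_nonneg (mul_nonneg (Nat.cast_nonneg _) ha.le) hnn
      exact div_nonneg h1 (Real.log_natCast_nonneg n)
    have h95 : ∀ᶠ n : ℕ in atTop, (0.95:ℝ) < d0 n (m n) (p n) / Real.log n :=
      eventually_lt_of_lt_liminf (lt_of_lt_of_le (by norm_num) hd0) hbdd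
    filter_upwards [h95, eventually_ge_atTop 3] with N h95N hN3
    obtain ⟨hp0, hp1⟩ := hp N
    set Q : ℝ := 1 - (1 - p N) ^ (N - 1) with hQ
    have hd0def : d0 N (m N) (p N) = (m N : ℝ) * p N * Q := rfl
    have hd1def : d1 N (m N) (p N) = (N : ℝ) * (m N) * (p N) ^ 2 := rfl
    have hL0 : 0 < Real.log N := Real.log_pos (by exact_mod_cast (by omega : 1 < N))
    have hd0L : 0.95 * Real.log N < d0 N (m N) (p N) := by
      rw [lt_div_iff₀ hL0] at h95N
      linarith
    have hd0pos : 0 < d0 N (m N) (p N) := lt_of_le_of_lt (by positivity) hd0L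
    have hQ1 : Q ≤ 1 := by
      have : (0:ℝ) ≤ (1 - p N) ^ (N - 1) := pow_nonneg (by linarith) _
      rw [hQ]; linarith
    have hQ0 : 0 < Q := by
      rcases le_or_gt Q 0 with h | h
      · exfalso
        have : d0 N (m N) (p N) ≤ 0 := by
          rw [hd0def]
          exact mul_nonpos_of_nonneg_of_nonpos (by positivity) h
        linarith
      · exact h
    have hMpos : (0:ℝ) < m N := by
      rcases Nat.eq_zero_or_pos (m N) with h | h
      · exfalso; rw [hd0def, h] at hd0pos; simp at hd0pos
      · exact_mod_cast h
    have hMP : (0:ℝ) < (m N : ℝ) * p N := mul_pos hMpos hp0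
    have hd0_le_MP : d0 N (m N) (p N) ≤ (m N : ℝ) * p N := by
      rw [hd0def]
      nlinarith
    have hNm1 : ((N - 1 : ℕ) : ℝ) ≤ (N : ℝ) := by
      exact_mod_cast Nat.sub_le N 1
    have hQle : Q ≤ ((N - 1 : ℕ) : ℝ) * p N := by
      have hber := one_add_mul_le_pow (by linarith : (-2:ℝ) ≤ -(p N)) (N - 1)
      rw [← sub_eq_add_neg] at hber
      rw [hQ]
      nlinarith [hber]
    have hd0_le_d1 : d0 N (m N) (p N) ≤ d1 N (m N) (p N) := by
      rw [hd0def, hd1def]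
      have h1 : (m N : ℝ) * p N * Q ≤ (m N : ℝ) * p N * (((N - 1 : ℕ) : ℝ) * p N) :=
        mul_le_mul_of_nonneg_left hQle hMP.le
      have h2 : ((N - 1 : ℕ) : ℝ) * ((m N : ℝ) * p N * p N) ≤ (N:ℝ) * ((m N : ℝ) * p N * p N) :=
        mul_le_mul_of_nonneg_right hNm1 (by positivity)
      nlinarith [h1, h2]
    have hd1pos : 0 < d1 N (m N) (p N) := lt_of_lt_of_le hd0pos hd0_le_d1
    set k1 : ℕ := ⌊4 * (m N : ℝ) * p N⌋₊ + 1 with hk1def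
    set k2 : ℕ := ⌊4 * d0 N (m N) (p N)⌋₊ + 1 with hk2def
    set k3 : ℕ := ⌊12 * d1 N (m N) (p N)⌋₊ + 1 with hk3def
    set K : ℕ := ⌊4 * (m N : ℝ) * p N⌋₊ with hKdef
    have hk1posn : 0 < k1 := by rw [hk1def]; omega
    have hk2posn : 0 < k2 := by rw [hk2def]; omega
    have hk3posn : 0 < k3 := by rw [hk3def]; omega
    have hk1ge : 4 * (m N : ℝ) * p N ≤ (k1 : ℝ) := by
      push_cast [hk1def]
      exact (Nat.lt_floor_add_one _).le
    have hk2ge : 4 * d0 N (m N) (p N) ≤ (k2 : ℝ) := by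
      push_cast [hk2def]
      exact (Nat.lt_floor_add_one _).le
    have hk3ge : 12 * d1 N (m N) (p N) ≤ (k3 : ℝ) := by
      push_cast [hk3def]
      exact (Nat.lt_floor_add_one _).le
    have hKle : (K : ℝ) ≤ 4 * (m N : ℝ) * p N := Nat.floor_le (by positivity)
    -- inclusion into bad events
    have hsub : (G N)ᶜ ⊆ ⋃ v : Fin N,
        ({ω : Fin N → Fin (m N) → Bool | k1 ≤ Wv ω v}
          ∪ {ω | k2 ≤ Wv' ω v} ∪ {ω | Wv ω v ≤ K ∧ k3 ≤ deg ω v}) := by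
      intro ω hω
      simp only [hG, Set.mem_compl_iff, Set.mem_setOf_eq, not_forall] at hω
      obtain ⟨v, hv⟩ := hω
      refine Set.mem_iUnion.mpr ⟨v, ?_⟩
      simp only [Set.mem_union, Set.mem_setOf_eq]
      by_cases h1 : (Wv ω v : ℝ) ≤ 4 * (m N : ℝ) * p N
      · by_cases h2 : (Wv' ω v : ℝ) ≤ 4 * d0 N (m N) (p N)
        · have h3 : ¬ ((deg ω v : ℝ) ≤ 12 * d1 N (m N) (p N)) := fun h3 => hv ⟨h1, h2, h3⟩
          push_neg at h3
          refine Or.inr ⟨Nat.le_floor h1, ?_⟩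
          have : ⌊12 * d1 N (m N) (p N)⌋₊ < deg ω v := (Nat.floor_lt (by positivity)).mpr h3
          omega
        · push_neg at h2
          refine Or.inl (Or.inr ?_)
          have : ⌊4 * d0 N (m N) (p N)⌋₊ < Wv' ω v := (Nat.floor_lt (by positivity)).mpr h2
          omega
      · push_neg at h1
        refine Or.inl (Or.inl ?_)
        have : ⌊4 * (m N : ℝ) * p N⌋₊ < Wv ω v := (Nat.floor_lt (by positivity)).mpr h1
        omega
    -- measure bound in ENNReal
    have hμ : rig N (m N) (p N) ((G N)ᶜ)
        ≤ (N : ℝ≥0∞) * (((m N).choose k1) * (ENNReal.ofReal (p N)) ^ k1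
          + ((m N).choose k2) * (ENNReal.ofReal (p N * Q)) ^ k2
          + (((N - 1) * K).choose k3) * (ENNReal.ofReal (p N)) ^ k3) := by
      calc rig N (m N) (p N) ((G N)ᶜ)
          ≤ rig N (m N) (p N) (⋃ v : Fin N,
              ({ω : Fin N → Fin (m N) → Bool | k1 ≤ Wv ω v}
                ∪ {ω | k2 ≤ Wv' ω v} ∪ {ω | Wv ω v ≤ K ∧ k3 ≤ deg ω v})) :=
            measure_mono hsub
        _ ≤ ∑ v : Fin N, rig N (m N) (p N)
              ({ω : Fin N → Fin (m N) → Bool | k1 ≤ Wv ω v}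
                ∪ {ω | k2 ≤ Wv' ω v} ∪ {ω | Wv ω v ≤ K ∧ k3 ≤ deg ω v}) :=
            measure_iUnion_fintype_le _ _
        _ ≤ ∑ _v : Fin N, (((m N).choose k1) * (ENNReal.ofReal (p N)) ^ k1
              + ((m N).choose k2) * (ENNReal.ofReal (p N * Q)) ^ k2
              + (((N - 1) * K).choose k3) * (ENNReal.ofReal (p N)) ^ k3) := by
            refine Finset.sum_le_sum fun v _ => ?_
            calc rig N (m N) (p N) _
                ≤ rig N (m N) (p N) ({ω : Fin N → Fin (m N) → Bool | k1 ≤ Wv ω v}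
                    ∪ {ω | k2 ≤ Wv' ω v})
                  + rig N (m N) (p N) {ω | Wv ω v ≤ K ∧ k3 ≤ deg ω v} := measure_union_le _ _
              _ ≤ rig N (m N) (p N) {ω : Fin N → Fin (m N) → Bool | k1 ≤ Wv ω v}
                  + rig N (m N) (p N) {ω | k2 ≤ Wv' ω v}
                  + rig N (m N) (p N) {ω | Wv ω v ≤ K ∧ k3 ≤ deg ω v} :=
                add_le_add_left (measure_union_le _ _) _
              _ ≤ _ := by
                  refine add_le_add (add_le_add (bound_W hp1.le v k1) ?_) (bound_deg hp1.le v K k3)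
                  exact bound_W' hp0.le hp1.le v k2
        _ = _ := by
            rw [Finset.sum_const, Finset.card_univ, Fintype.card_fin, nsmul_eq_mul]
    -- convert to real bound
    set t1 : ℝ := ((m N).choose k1 : ℝ) * (p N) ^ k1 with ht1def
    set t2 : ℝ := ((m N).choose k2 : ℝ) * (p N * Q) ^ k2 with ht2def
    set t3 : ℝ := ((((N - 1) * K).choose k3 : ℕ) : ℝ) * (p N) ^ k3 with ht3def
    have hofReal : rig N (m N) (p N) ((G N)ᶜ) ≤ ENNReal.ofReal ((N : ℝ) * (t1 + t2 + t3)) := by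
      refine hμ.trans (le_of_eq ?_)
      rw [ht1def, ht2def, ht3def]
      rw [ENNReal.ofReal_mul (Nat.cast_nonneg _), ENNReal.ofReal_add (by positivity) (by positivity),
        ENNReal.ofReal_add (by positivity) (by positivity),
        ENNReal.ofReal_mul (Nat.cast_nonneg _), ENNReal.ofReal_mul (Nat.cast_nonneg _),
        ENNReal.ofReal_mul (Nat.cast_nonneg _),
        ENNReal.ofReal_pow hp0.le, ENNReal.ofReal_pow (by positivity), ENNReal.ofReal_pow hp0.le,
        ENNReal.ofReal_natCast, ENNReal.ofReal_natCast, ENNReal.ofReal_natCast,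
        ENNReal.ofReal_natCast]
    have hxle : (rig N (m N) (p N) ((G N)ᶜ)).toReal ≤ (N : ℝ) * (t1 + t2 + t3) :=
      ENNReal.toReal_le_of_le_ofReal (by positivity) hofReal
    refine hxle.trans ?_
    -- real estimates
    have hk1pos : (0:ℝ) < k1 := by positivity
    have hk2pos : (0:ℝ) < k2 := by positivity
    have hk3pos : (0:ℝ) < k3 := by positivity
    have hNreal : (N:ℝ) = Real.exp (Real.log N) := (Real.exp_log (by positivity)).symm
    have hquarter : Real.exp 1 / 4 = Real.exp (1 - Real.log 4) := by
      rw [Real.exp_sub, Real.exp_log (by norm_num)]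
    have hthird : Real.exp 1 / 3 = Real.exp (1 - Real.log 3) := by
      rw [Real.exp_sub, Real.exp_log (by norm_num)]
    have ht1 : t1 ≤ Real.exp ((k1:ℝ) * (1 - Real.log 4)) := by
      calc t1 ≤ (Real.exp 1 * (m N) * (p N) / k1) ^ k1 :=
            choose_mul_pow_le hk1posn hp0.le
        _ ≤ (Real.exp 1 / 4) ^ k1 := by
            refine pow_le_pow_left₀ (by positivity) ?_ _
            rw [div_le_div_iff₀ hk1pos (by norm_num : (0:ℝ) < 4)]
            nlinarith [Real.exp_pos 1, hk1ge]
        _ = Real.exp ((k1:ℝ) * (1 - Real.log 4)) := by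
            rw [hquarter, ← Real.exp_nat_mul]
    have ht2 : t2 ≤ Real.exp ((k2:ℝ) * (1 - Real.log 4)) := by
      calc t2 ≤ (Real.exp 1 * (m N) * (p N * Q) / k2) ^ k2 :=
            choose_mul_pow_le hk2posn (by positivity)
        _ ≤ (Real.exp 1 / 4) ^ k2 := by
            refine pow_le_pow_left₀ (by positivity) ?_ _
            rw [div_le_div_iff₀ hk2pos (by norm_num : (0:ℝ) < 4)]
            have : (m N : ℝ) * (p N * Q) = d0 N (m N) (p N) := by rw [hd0def]; ring
            nlinarith [Real.exp_pos 1, hk2ge]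
        _ = Real.exp ((k2:ℝ) * (1 - Real.log 4)) := by
            rw [hquarter, ← Real.exp_nat_mul]
    have ht3 : t3 ≤ Real.exp ((k3:ℝ) * (1 - Real.log 3)) := by
      calc t3 ≤ (Real.exp 1 * ((N - 1) * K : ℕ) * (p N) / k3) ^ k3 :=
            choose_mul_pow_le hk3posn hp0.le
        _ ≤ (Real.exp 1 / 3) ^ k3 := by
            refine pow_le_pow_left₀ (by positivity) ?_ _
            rw [div_le_div_iff₀ hk3pos (by norm_num : (0:ℝ) < 3)]
            have hcast : (((N - 1) * K : ℕ) : ℝ) = ((N - 1 : ℕ) : ℝ) * (K : ℝ) := by push_cast; ring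
            have hKP : ((N - 1 : ℕ) : ℝ) * (K : ℝ) * p N ≤ 4 * d1 N (m N) (p N) := by
              have h1 : ((N - 1 : ℕ) : ℝ) * (K : ℝ) * p N
                  ≤ (N : ℝ) * (4 * (m N : ℝ) * p N) * p N := by
                have hK0 : (0:ℝ) ≤ (K:ℝ) := Nat.cast_nonneg _
                have hs1 : ((N - 1 : ℕ) : ℝ) * (K : ℝ) ≤ (N : ℝ) * (4 * (m N : ℝ) * p N) :=
                  mul_le_mul hNm1 hKle hK0 (Nat.cast_nonneg _)
                exact mul_le_mul_of_nonneg_right hs1 hp0.le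
              rw [hd1def]
              nlinarith [h1]
            rw [hcast]
            nlinarith [Real.exp_pos 1, hk3ge]
        _ = Real.exp ((k3:ℝ) * (1 - Real.log 3)) := by
            rw [hthird, ← Real.exp_nat_mul]
    -- combine
    have hk1L : 3.8 * Real.log N ≤ (k1:ℝ) := by linarith
    have hk2L : 3.8 * Real.log N ≤ (k2:ℝ) := by linarith
    have hk3L : 11.4 * Real.log N ≤ (k3:ℝ) := by linarith
    have hlog4' : (0.3862943606:ℝ) ≤ Real.log 4 - 1 := by linarith [log_four_gt]
    have hlog3' : (0.088:ℝ) ≤ Real.log 3 - 1 := by linarith [log_three_gt]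
    have hL38 : (0:ℝ) ≤ 3.8 * Real.log N := by positivity
    have hL114 : (0:ℝ) ≤ 11.4 * Real.log N := by positivity
    have hm1 : 3.8 * Real.log N * 0.3862943606 ≤ 3.8 * Real.log N * (Real.log 4 - 1) :=
      mul_le_mul_of_nonneg_left hlog4' hL38
    have hm1' : 3.8 * Real.log N * (Real.log 4 - 1) ≤ (k1:ℝ) * (Real.log 4 - 1) :=
      mul_le_mul_of_nonneg_right hk1L (by linarith)
    have hm2' : 3.8 * Real.log N * (Real.log 4 - 1) ≤ (k2:ℝ) * (Real.log 4 - 1) :=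
      mul_le_mul_of_nonneg_right hk2L (by linarith)
    have hm3 : 11.4 * Real.log N * 0.088 ≤ 11.4 * Real.log N * (Real.log 3 - 1) :=
      mul_le_mul_of_nonneg_left hlog3' hL114
    have hm3' : 11.4 * Real.log N * (Real.log 3 - 1) ≤ (k3:ℝ) * (Real.log 3 - 1) :=
      mul_le_mul_of_nonneg_right hk3L (by linarith)
    have hfin1 : (N:ℝ) * t1 ≤ Real.exp (-(0.46:ℝ) * Real.log N) := by
      calc (N:ℝ) * t1 ≤ Real.exp (Real.log N) * Real.exp ((k1:ℝ) * (1 - Real.log 4)) := by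
            rw [← hNreal]
            exact mul_le_mul_of_nonneg_left ht1 (by positivity)
        _ = Real.exp (Real.log N + (k1:ℝ) * (1 - Real.log 4)) := (Real.exp_add _ _).symm
        _ ≤ Real.exp (-(0.46:ℝ) * Real.log N) := by
            refine Real.exp_le_exp.mpr ?_
            linarith [hm1, hm1']
    have hfin2 : (N:ℝ) * t2 ≤ Real.exp (-(0.46:ℝ) * Real.log N) := by
      calc (N:ℝ) * t2 ≤ Real.exp (Real.log N) * Real.exp ((k2:ℝ) * (1 - Real.log 4)) := by
            rw [← hNreal]
            exact mul_le_mul_of_nonneg_left ht2 (by positivity)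
        _ = Real.exp (Real.log N + (k2:ℝ) * (1 - Real.log 4)) := (Real.exp_add _ _).symm
        _ ≤ Real.exp (-(0.46:ℝ) * Real.log N) := by
            refine Real.exp_le_exp.mpr ?_
            linarith [hm1, hm2']
    have hfin3 : (N:ℝ) * t3 ≤ Real.exp (-(0.003:ℝ) * Real.log N) := by
      calc (N:ℝ) * t3 ≤ Real.exp (Real.log N) * Real.exp ((k3:ℝ) * (1 - Real.log 3)) := by
            rw [← hNreal]
            exact mul_le_mul_of_nonneg_left ht3 (by positivity)
        _ = Real.exp (Real.log N + (k3:ℝ) * (1 - Real.log 3)) := (Real.exp_add _ _).symm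
        _ ≤ Real.exp (-(0.003:ℝ) * Real.log N) := by
            refine Real.exp_le_exp.mpr ?_
            linarith [hm3, hm3']
    calc (N:ℝ) * (t1 + t2 + t3) = (N:ℝ) * t1 + (N:ℝ) * t2 + (N:ℝ) * t3 := by ring
      _ ≤ Real.exp (-(0.46:ℝ) * Real.log N) * 2 + Real.exp (-(0.003:ℝ) * Real.log N) := by
          linarith
  have : Tendsto (fun _ : ℕ => (1:ℝ)) atTop (nhds 1) := tendsto_const_nhds
  simpa using this.sub hzero
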